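/- Let m, n ∈ ℕ and let s_{j,ℓ} ∈ ℂ with Re(s_{j,ℓ}) > 0 for all 1 ≤ j ≤ n, 1 ≤ ℓ ≤ m, and assume s_{j,ℓ} + conj(s_{k,ℓ}) ≠ 1 for all j, k, ℓ. Then the n×n complex matrix whose (j,k) entry is ∏_{ℓ=1}^{m} (1 − 2^{1 − s_{j,ℓ} − conj(s_{k,ℓ})}) Γ(s_{j,ℓ} + conj(s_{k,ℓ}) + 1) ζ(s_{j,ℓ} + conj(s_{k,ℓ})) is positive semidefinite, where Γ is the Gamma function and ζ is the Riemann zeta function. -/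

import Mathlib

open Complex ComplexOrder

open Complex MeasureTheory Set Filter Asymptotics Real

noncomputable def Fw : ℝ → ℂ := fun t ↦ ((rexp (-t) / (1 + rexp (-t)) ^ 2 : ℝ) : ℂ)

lemma Fw_real_nonneg (t : ℝ) : 0 ≤ rexp (-t) / (1 + rexp (-t)) ^ 2 := by positivity

lemma Fw_cont : Continuous Fw := by
  apply Complex.continuous_ofReal.comp
  exact (Real.continuous_exp.comp continuous_neg).div
    (((continuous_const.add (Real.continuous_exp.comp continuous_neg)).pow 2))
    (fun t ↦ by positivity)

lemma Fw_norm_le (t : ℝ) : ‖Fw t‖ ≤ rexp (-t) := by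
  rw [Fw, Complex.norm_real, Real.norm_of_nonneg (Fw_real_nonneg t)]
  have h1 : (1:ℝ) ≤ (1 + rexp (-t)) ^ 2 := by nlinarith [Real.exp_pos (-t)]
  calc rexp (-t) / (1 + rexp (-t)) ^ 2 ≤ rexp (-t) / 1 :=
        div_le_div_of_nonneg_left (Real.exp_pos _).le one_pos h1
    _ = rexp (-t) := div_one _

lemma Fw_bigO_top : Fw =O[atTop] fun t ↦ rexp (-1 * t) := by
  apply IsBigO.of_bound 1
  filter_upwards with t
  simpa using Fw_norm_le t

lemma Fw_bigO_zero : Fw =O[nhdsWithin 0 (Ioi 0)] fun t : ℝ ↦ t ^ (-(0:ℝ)) := by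
  have : (fun t : ℝ ↦ t ^ (-(0:ℝ))) = fun _ ↦ (1:ℝ) := by
    funext t; rw [neg_zero, Real.rpow_zero]
  rw [this]
  apply IsBigO.of_bound 1
  filter_upwards [self_mem_nhdsWithin] with t (ht : 0 < t)
  have : rexp (-t) ≤ 1 := Real.exp_le_one_iff.mpr (by linarith)
  simpa using (Fw_norm_le t).trans this

lemma Fw_locInt : LocallyIntegrableOn Fw (Ioi 0) :=
  Fw_cont.locallyIntegrable.locallyIntegrableOn _

lemma Fw_mellinConv {z : ℂ} (hz : 0 < z.re) : MellinConvergent Fw (z + 1) :=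
  mellinConvergent_of_isBigO_rpow_exp one_pos Fw_locInt Fw_bigO_top Fw_bigO_zero
    (by simp only [Complex.add_re, Complex.one_re, neg_zero]; linarith)

lemma Fw_integrable {z : ℂ} (hz : 0 < z.re) :
    IntegrableOn (fun t : ℝ ↦ (t : ℂ) ^ z * Fw t) (Ioi 0) := by
  have h := Fw_mellinConv hz
  rw [MellinConvergent] at h
  simpa only [add_sub_cancel_right, smul_eq_mul] using h

lemma Fw_hasSum {t : ℝ} (ht : 0 < t) :
    HasSum (fun n : ℕ ↦ ((-1 : ℂ) ^ (n + 1) * n) * rexp (-(n : ℝ) * t)) (Fw t) := by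
  set x : ℝ := rexp (-t) with hx
  have hx0 : 0 < x := Real.exp_pos _
  have hx1 : x < 1 := Real.exp_lt_one_iff.mpr (by linarith)
  have hnorm : ‖(-(x:ℂ))‖ < 1 := by
    rw [norm_neg, Complex.norm_real, Real.norm_of_nonneg hx0.le]; exact hx1
  have h := hasSum_coe_mul_geometric_of_norm_lt_one hnorm
  have h2 := h.neg
  convert h2 using 2 with n
  · rfl
  · have hxn : rexp (-(n : ℝ) * t) = x ^ n := by
      rw [hx, ← Real.exp_nat_mul]; ring_nf
    rw [hxn]
    push_cast
    rw [neg_pow]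
    ring
  · rw [Fw, sub_neg_eq_add, neg_div, neg_neg, hx]
    push_cast
    ring

lemma eta_hasSum {z : ℂ} (hz : 1 < z.re) :
    HasSum (fun n : ℕ ↦ ((-1 : ℂ) ^ (n + 1) * n) / (n : ℂ) ^ (z + 1))
      ((1 - 2 ^ (1 - z)) * riemannZeta z) := by
  have hz0 : z ≠ 0 := fun h ↦ by simp [h] at hz; linarith
  have hsummable : Summable (fun n : ℕ ↦ 1 / (n : ℂ) ^ z) :=
    Complex.summable_one_div_nat_cpow.mpr hz
  have hS : HasSum (fun n : ℕ ↦ 1 / (n : ℂ) ^ z) (riemannZeta z) := by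
    have := hsummable.hasSum
    rwa [← zeta_eq_tsum_one_div_nat_cpow hz] at this
  -- even part
  set e : ℕ → ℂ := fun n ↦ if Even n then 1 / (n : ℂ) ^ z else 0 with he
  have hinj : Function.Injective (fun k : ℕ ↦ 2 * k) := fun a b h ↦ by
    simpa using h
  have hvanish : ∀ n ∉ Set.range (fun k : ℕ ↦ 2 * k), e n = 0 := by
    intro n hn
    rw [he]
    simp only [ite_eq_right_iff]
    intro hev
    exact absurd (by obtain ⟨k, hk⟩ := hev; exact ⟨k, by simp only []; omega⟩) hn
  have hcomp : ∀ k : ℕ, e (2 * k) = (2 : ℂ) ^ (-z) * (1 / (k : ℂ) ^ z) := by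
    intro k
    rw [he]
    simp only [show Even (2 * k) from even_two_mul k, if_pos]
    have h2 : ((2 * k : ℕ) : ℂ) = (2 : ℝ) * (k : ℝ) := by push_cast; ring
    rw [h2, mul_cpow_ofReal_nonneg (by norm_num) (Nat.cast_nonneg k)]
    rw [Complex.cpow_neg]
    push_cast
    rw [mul_comm, one_div, mul_inv]
    ring
  have hE : HasSum e ((2 : ℂ) ^ (-z) * riemannZeta z) := by
    rw [← Function.Injective.hasSum_iff hinj hvanish]
    exact (hS.mul_left ((2 : ℂ) ^ (-z))).congr_fun (fun k ↦ hcomp k)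
  have hfinal := hS.sub (hE.mul_left 2)
  have hterm : ∀ n : ℕ, 1 / (n : ℂ) ^ z - 2 * e n
      = ((-1 : ℂ) ^ (n + 1) * n) / (n : ℂ) ^ (z + 1) := by
    intro n
    rcases Nat.eq_zero_or_pos n with rfl | hn
    · simp [he, zero_cpow hz0, zero_cpow (show z + 1 ≠ 0 by
        intro h; have := congrArg Complex.re h; simp at this; linarith)]
    have hn0 : (n : ℂ) ≠ 0 := Nat.cast_ne_zero.mpr hn.ne'
    have hpow : (n : ℂ) ^ (z + 1) = (n : ℂ) ^ z * n := by
      rw [Complex.cpow_add _ _ hn0, Complex.cpow_one]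
    have hpz : (n : ℂ) ^ z ≠ 0 := by
      simp [Complex.cpow_eq_zero_iff, hn0]
    rcases Nat.even_or_odd n with hev | hodd
    · have h1 : (-1 : ℂ) ^ (n + 1) = -1 := by
        rw [pow_succ, hev.neg_one_pow]; ring
      rw [he]; simp only [if_pos hev, h1, hpow]
      field_simp
      ring
    · have h1 : (-1 : ℂ) ^ (n + 1) = 1 := by
        have : Even (n + 1) := hodd.add_one
        exact this.neg_one_pow
      rw [he]; simp only [if_neg (Nat.not_even_iff_odd.mpr hodd), h1, hpow]
      field_simp
      ring
  have hval : riemannZeta z - 2 * ((2 : ℂ) ^ (-z) * riemannZeta z)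
      = (1 - 2 ^ (1 - z)) * riemannZeta z := by
    have h2 : (2 : ℂ) ^ (1 - z) = 2 * (2 : ℂ) ^ (-z) := by
      rw [sub_eq_add_neg, Complex.cpow_add _ _ (by norm_num : (2:ℂ) ≠ 0), Complex.cpow_one]
    rw [h2]; ring
  rw [← hval]
  exact hfinal.congr_fun (fun n ↦ (hterm n).symm)

lemma mellin_Fw_eq {z : ℂ} (hz : 1 < z.re) :
    mellin Fw (z + 1) = (1 - 2 ^ (1 - z)) * Complex.Gamma (z + 1) * riemannZeta z := by
  have hz1 : 0 < (z + 1).re := by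
    simp only [Complex.add_re, Complex.one_re]; linarith
  have hp : ∀ n : ℕ, ((-1 : ℂ) ^ (n + 1) * n) = 0 ∨ 0 < (n : ℝ) := by
    intro n
    rcases Nat.eq_zero_or_pos n with rfl | hn
    · left; simp
    · right; exact_mod_cast hn
  have hF : ∀ t ∈ Ioi (0:ℝ), HasSum
      (fun n : ℕ ↦ ((-1 : ℂ) ^ (n + 1) * n) * rexp (-(n : ℝ) * t)) (Fw t) :=
    fun t ht ↦ Fw_hasSum ht
  have hsum : Summable (fun n : ℕ ↦ ‖(-1 : ℂ) ^ (n + 1) * (n : ℂ)‖ / (n : ℝ) ^ (z + 1).re) := by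
    have hbase : Summable (fun n : ℕ ↦ (n : ℝ) ^ (-z.re)) :=
      Real.summable_nat_rpow.mpr (by linarith)
    refine hbase.congr fun n ↦ ?_
    rcases Nat.eq_zero_or_pos n with rfl | hn
    · simp [Real.zero_rpow (by linarith : -z.re ≠ 0)]
    have hn0 : (0:ℝ) < n := by exact_mod_cast hn
    have hnorm : ‖(-1 : ℂ) ^ (n + 1) * (n : ℂ)‖ = (n : ℝ) := by
      rw [norm_mul, norm_pow, norm_neg, norm_one, one_pow, one_mul]
      simp
    rw [hnorm]
    rw [show (z + 1).re = z.re + 1 by simp, Real.rpow_add hn0, Real.rpow_one,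
      Real.rpow_neg hn0.le]
    field_simp [Real.rpow_natCast]
  have key := hasSum_mellin hp hz1 hF hsum
  have h2 := (eta_hasSum hz).mul_left (Complex.Gamma (z + 1))
  have h2' : HasSum (fun n : ℕ ↦ Complex.Gamma (z + 1) * ((-1 : ℂ) ^ (n + 1) * n)
      / ((n : ℝ) : ℂ) ^ (z + 1)) (Complex.Gamma (z + 1) * ((1 - 2 ^ (1 - z)) * riemannZeta z)) := by
    refine h2.congr_fun fun n ↦ ?_
    push_cast
    rw [mul_div_assoc]
  rw [key.unique h2']
  ring

lemma U_preconnected : IsPreconnected {w : ℂ | 0 < w.re ∧ w ≠ 1} := by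
  set C1 : Set ℂ := {w | 0 < w.re} ∩ {w | w.re < 1}
  set C2 : Set ℂ := {w | 1 < w.re}
  set C3 : Set ℂ := {w | 0 < w.re} ∩ {w | 0 < w.im}
  set C4 : Set ℂ := {w | 0 < w.re} ∩ {w | w.im < 0}
  have hC1 : IsPreconnected C1 :=
    ((convex_halfSpace_re_gt 0).inter (convex_halfSpace_re_lt 1)).isPreconnected
  have hC2 : IsPreconnected C2 := (convex_halfSpace_re_gt 1).isPreconnected
  have hC3 : IsPreconnected C3 :=
    ((convex_halfSpace_re_gt 0).inter (convex_halfSpace_im_gt 0)).isPreconnected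
  have hC4 : IsPreconnected C4 :=
    ((convex_halfSpace_re_gt 0).inter (convex_halfSpace_im_lt 0)).isPreconnected
  have h13 : IsPreconnected (C1 ∪ C3) := by
    apply hC1.union (⟨1/2, 1/2⟩ : ℂ) ?_ ?_ hC3
    · exact ⟨by norm_num, by norm_num⟩
    · exact ⟨by norm_num, by norm_num⟩
  have h132 : IsPreconnected ((C1 ∪ C3) ∪ C2) := by
    apply h13.union (⟨2, 1⟩ : ℂ) ?_ ?_ hC2
    · exact Or.inr ⟨by norm_num, by norm_num⟩
    · show (1:ℝ) < 2; norm_num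
  have h1324 : IsPreconnected (((C1 ∪ C3) ∪ C2) ∪ C4) := by
    apply h132.union (⟨1/2, -1/2⟩ : ℂ) ?_ ?_ hC4
    · exact Or.inl (Or.inl ⟨by norm_num, by norm_num⟩)
    · exact ⟨by norm_num, by norm_num⟩
  have hU : {w : ℂ | 0 < w.re ∧ w ≠ 1} = ((C1 ∪ C3) ∪ C2) ∪ C4 := by
    ext w
    simp only [Set.mem_setOf_eq, Set.mem_union, Set.mem_inter_iff, C1, C2, C3, C4]
    constructor
    · rintro ⟨hre, hne⟩
      rcases lt_trichotomy w.re 1 with h | h | h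
      · exact Or.inl (Or.inl (Or.inl ⟨hre, h⟩))
      · rcases lt_trichotomy w.im 0 with h' | h' | h'
        · exact Or.inr ⟨hre, h'⟩
        · exact absurd (Complex.ext (h.trans Complex.one_re.symm) (h'.trans Complex.one_im.symm)) hne
        · exact Or.inl (Or.inl (Or.inr ⟨hre, h'⟩))
      · exact Or.inl (Or.inr h)
    · rintro (((⟨h1, h2⟩ | ⟨h1, h2⟩) | h) | ⟨h1, h2⟩)
      · exact ⟨h1, fun hw ↦ by rw [hw] at h2; simp at h2⟩
      · exact ⟨h1, fun hw ↦ by rw [hw] at h2; simp at h2⟩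
      · refine ⟨by linarith, fun hw ↦ by rw [hw] at h; simp at h⟩
      · exact ⟨h1, fun hw ↦ by rw [hw] at h2; simp at h2⟩
  rw [hU]
  exact h1324

lemma key_eq {z : ℂ} (hz : 0 < z.re) (hz1 : z ≠ 1) :
    (1 - 2 ^ (1 - z)) * Complex.Gamma (z + 1) * riemannZeta z
      = ∫ t in Ioi (0:ℝ), (t : ℂ) ^ z * Fw t := by
  set U : Set ℂ := {w | 0 < w.re ∧ w ≠ 1} with hUdef
  have hUo : IsOpen U := by
    have : U = (Complex.re ⁻¹' Ioi 0) ∩ {(1:ℂ)}ᶜ := by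
      ext w
      simp only [hUdef, Set.mem_setOf_eq, Set.mem_inter_iff, Set.mem_preimage,
        Set.mem_Ioi, Set.mem_compl_iff, Set.mem_singleton_iff]
    rw [this]
    exact (isOpen_Ioi.preimage Complex.continuous_re).inter isOpen_compl_singleton
  set g : ℂ → ℂ := fun w ↦ mellin Fw (w + 1) with hgdef
  set h : ℂ → ℂ := fun w ↦ (1 - 2 ^ (1 - w)) * Complex.Gamma (w + 1) * riemannZeta w with hhdef
  have hg : AnalyticOnNhd ℂ g U := by
    refine DifferentiableOn.analyticOnNhd (fun w hw ↦ ?_) hUo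
    have : DifferentiableAt ℂ (mellin Fw) (w + 1) :=
      mellin_differentiableAt_of_isBigO_rpow_exp one_pos Fw_locInt Fw_bigO_top Fw_bigO_zero
        (by simp only [Complex.add_re, Complex.one_re, neg_zero]; linarith [hw.1])
    exact (this.comp w ((differentiableAt_id.add_const 1))).differentiableWithinAt
  have hh : AnalyticOnNhd ℂ h U := by
    refine DifferentiableOn.analyticOnNhd (fun w hw ↦ ?_) hUo
    have h1 : DifferentiableAt ℂ (fun w : ℂ ↦ 1 - (2:ℂ) ^ (1 - w)) w := by
      apply (differentiableAt_const 1).sub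
      exact ((differentiableAt_const 1).sub differentiableAt_id).const_cpow
        (Or.inl two_ne_zero)
    have h2 : DifferentiableAt ℂ (fun w : ℂ ↦ Complex.Gamma (w + 1)) w := by
      have := Complex.differentiableAt_Gamma (w + 1) (fun m ↦ ?_)
      · exact this.comp w (differentiableAt_id.add_const 1)
      · intro hcontra
        have := congrArg Complex.re hcontra
        simp only [Complex.add_re, Complex.one_re, Complex.neg_re, Complex.natCast_re] at this
        have := hw.1
        have : (0:ℝ) ≤ m := Nat.cast_nonneg m
        linarith
    have h3 : DifferentiableAt ℂ riemannZeta w := differentiableAt_riemannZeta hw.2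
    exact ((h1.mul h2).mul h3).differentiableWithinAt
  have h2U : (2 : ℂ) ∈ U := ⟨by norm_num, by
    intro hcontra
    have := congrArg Complex.re hcontra
    norm_num at this⟩
  have hev : g =ᶠ[nhds (2 : ℂ)] h := by
    have hopen : IsOpen {w : ℂ | 1 < w.re} := isOpen_lt continuous_const Complex.continuous_re
    have hmem : {w : ℂ | 1 < w.re} ∈ nhds (2 : ℂ) := hopen.mem_nhds (by norm_num)
    filter_upwards [hmem] with w hw
    exact mellin_Fw_eq hw
  have heq := hg.eqOn_of_preconnected_of_eventuallyEq hh U_preconnected h2U hev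
  have hzU : z ∈ U := ⟨hz, hz1⟩
  have := (heq hzU).symm
  rw [hhdef, hgdef] at this
  simp only at this
  rw [this, mellin, add_sub_cancel_right]
  simp_rw [smul_eq_mul]

open ComplexOrder

lemma cmul_nonneg {a b : ℂ} (ha : 0 ≤ a) (hb : 0 ≤ b) : 0 ≤ a * b := by
  rw [Complex.nonneg_iff] at ha hb ⊢
  constructor
  · simp only [Complex.mul_re, ← ha.2, ← hb.2, mul_zero, sub_zero]
    exact mul_nonneg ha.1 hb.1
  · simp only [Complex.mul_im, ← ha.2, ← hb.2, mul_zero, zero_mul, add_zero]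

lemma integral_nonneg_cplx {g : ℝ → ℂ} (h : ∀ t ∈ Ioi (0:ℝ), 0 ≤ g t) :
    0 ≤ ∫ t in Ioi (0:ℝ), g t := by
  by_cases hint : IntegrableOn g (Ioi 0) volume
  · rw [Complex.nonneg_iff]
    constructor
    · have h1 : 0 ≤ ∫ t in Ioi (0:ℝ), (g t).re :=
        setIntegral_nonneg measurableSet_Ioi fun t ht ↦ (Complex.nonneg_iff.mp (h t ht)).1
      have h2 := integral_re (𝕜 := ℂ) hint
      simp only [RCLike.re_to_complex] at h2
      rw [← h2]; exact h1
    · have h1 : ∫ t in Ioi (0:ℝ), (g t).im = 0 := by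
        rw [setIntegral_congr_fun measurableSet_Ioi
          (fun t ht ↦ ((Complex.nonneg_iff.mp (h t ht)).2).symm)]
        simp
      have h2 := integral_im (𝕜 := ℂ) hint
      simp only [RCLike.im_to_complex] at h2
      rw [← h2, h1]
  · rw [MeasureTheory.integral_undef hint]

noncomputable def Bfn {m n : ℕ} (s : Fin n → Fin m → ℂ) (j k : Fin n) (x : Fin m) : ℂ :=
  (1 - (2:ℂ) ^ (1 - (s j x + (starRingEnd ℂ) (s k x)))) *
    Complex.Gamma (s j x + (starRingEnd ℂ) (s k x) + 1) *
    riemannZeta (s j x + (starRingEnd ℂ) (s k x))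

lemma key_pos {m n : ℕ} (s : Fin n → Fin m → ℂ)
    (hs : ∀ j l, 0 < (s j l).re)
    (hne : ∀ j k l, s j l + (starRingEnd ℂ) (s k l) ≠ 1) :
    ∀ L : Finset (Fin m), ∀ c : Fin n → ℂ,
      0 ≤ ∑ j : Fin n, ∑ k : Fin n,
        (∏ x ∈ L, Bfn s j k x) * c j * (starRingEnd ℂ) (c k) := by
  intro L
  induction L using Finset.induction_on with
  | empty =>
    intro c
    simp only [Finset.prod_empty, one_mul]
    have hsum : ∑ j : Fin n, ∑ k : Fin n, c j * (starRingEnd ℂ) (c k)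
        = (∑ j : Fin n, c j) * ∑ k : Fin n, (starRingEnd ℂ) (c k) :=
      (Finset.sum_mul_sum _ _ _ _).symm
    rw [hsum, ← map_sum, Complex.mul_conj]
    exact Complex.zero_le_real.mpr (Complex.normSq_nonneg _)
  | @insert l₀ L hl ih =>
    intro c
    simp only [Finset.prod_insert hl]
    have hzre : ∀ j k : Fin n, 0 < (s j l₀ + (starRingEnd ℂ) (s k l₀)).re := by
      intro j k
      rw [Complex.add_re, Complex.conj_re]
      exact add_pos (hs j l₀) (hs k l₀)
    have hpt : ∀ j k : Fin n, ∀ t ∈ Ioi (0:ℝ),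
        ((∏ x ∈ L, Bfn s j k x) * c j * (starRingEnd ℂ) (c k))
            * ((t : ℂ) ^ (s j l₀ + (starRingEnd ℂ) (s k l₀)) * Fw t)
          = (∏ x ∈ L, Bfn s j k x) * (c j * (t : ℂ) ^ (s j l₀))
            * (starRingEnd ℂ) (c k * (t : ℂ) ^ (s k l₀)) * Fw t := by
      intro j k t ht
      have ht0 : (t : ℂ) ≠ 0 := Complex.ofReal_ne_zero.mpr (ne_of_gt ht)
      have harg : (t : ℂ).arg ≠ Real.pi := by
        rw [Complex.arg_ofReal_of_nonneg (le_of_lt ht)]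
        exact Ne.symm Real.pi_ne_zero
      have hconj : (t : ℂ) ^ ((starRingEnd ℂ) (s k l₀))
          = (starRingEnd ℂ) ((t : ℂ) ^ (s k l₀)) := by
        have hcp := Complex.conj_cpow (t : ℂ) ((starRingEnd ℂ) (s k l₀)) harg
        rwa [Complex.conj_ofReal, Complex.conj_conj] at hcp
      rw [Complex.cpow_add _ _ ht0, hconj, map_mul]
      ring
    have hint : ∀ j k : Fin n, IntegrableOn
        (fun t : ℝ ↦ (∏ x ∈ L, Bfn s j k x) * (c j * (t : ℂ) ^ (s j l₀))
          * (starRingEnd ℂ) (c k * (t : ℂ) ^ (s k l₀)) * Fw t) (Ioi 0) := by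
      intro j k
      have hbase := (Fw_integrable (hzre j k)).const_mul
        ((∏ x ∈ L, Bfn s j k x) * c j * (starRingEnd ℂ) (c k))
      exact MeasureTheory.IntegrableOn.congr_fun hbase (fun t ht ↦ hpt j k t ht)
        measurableSet_Ioi
    have hterm : ∀ j k : Fin n,
        (Bfn s j k l₀ * ∏ x ∈ L, Bfn s j k x) * c j * (starRingEnd ℂ) (c k)
          = ∫ t in Ioi (0:ℝ), (∏ x ∈ L, Bfn s j k x) * (c j * (t : ℂ) ^ (s j l₀))
              * (starRingEnd ℂ) (c k * (t : ℂ) ^ (s k l₀)) * Fw t := by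
      intro j k
      have he := key_eq (hzre j k) (hne j k l₀)
      rw [Bfn, he]
      rw [show ((∫ t in Ioi (0:ℝ), (t:ℂ) ^ (s j l₀ + (starRingEnd ℂ) (s k l₀)) * Fw t)
            * ∏ x ∈ L, Bfn s j k x) * c j * (starRingEnd ℂ) (c k)
          = ((∏ x ∈ L, Bfn s j k x) * c j * (starRingEnd ℂ) (c k))
            * ∫ t in Ioi (0:ℝ), (t:ℂ) ^ (s j l₀ + (starRingEnd ℂ) (s k l₀)) * Fw t by ring,
        ← MeasureTheory.integral_const_mul]
      exact setIntegral_congr_fun measurableSet_Ioi fun t ht ↦ hpt j k t ht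
    refine le_of_le_of_eq ?_
      (Finset.sum_congr rfl fun j _ ↦ Finset.sum_congr rfl fun k _ ↦ (hterm j k).symm)
    rw [Finset.sum_congr rfl fun j (_ : j ∈ Finset.univ) ↦
        (integral_finset_sum Finset.univ (fun k _ ↦ hint j k)).symm,
      ← integral_finset_sum _ (fun j _ ↦ integrable_finset_sum _ (fun k _ ↦ hint j k))]
    apply integral_nonneg_cplx
    intro t ht
    have hI := ih (fun j ↦ c j * (t : ℂ) ^ (s j l₀))
    simp only [← Finset.sum_mul]
    exact cmul_nonneg hI (Complex.zero_le_real.mpr (Fw_real_nonneg t))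


/-- For `s_{j,ℓ} ∈ ℂ` with `Re(s_{j,ℓ}) > 0` and `s_{j,ℓ} + conj s_{k,ℓ} ≠ 1`, the matrix
with `(j,k)` entry
`∏_{ℓ=1}^m (1 - 2^{1 - s_{j,ℓ} - conj s_{k,ℓ}}) Γ(s_{j,ℓ} + conj s_{k,ℓ} + 1) ζ(s_{j,ℓ} + conj s_{k,ℓ})`
is positive semidefinite. -/
theorem eta_gamma_succ_zeta_matrix_posSemidef (m n : ℕ) (s : Fin n → Fin m → ℂ)
    (hs : ∀ j l, 0 < (s j l).re)
    (hne : ∀ j k l, s j l + (starRingEnd ℂ) (s k l) ≠ 1) :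
    ∀ c : Fin n → ℂ,
      0 ≤ ∑ j : Fin n, ∑ k : Fin n,
        (∏ l : Fin m,
            (1 - (2 : ℂ) ^ (1 - s j l - (starRingEnd ℂ) (s k l)))
              * Complex.Gamma (s j l + (starRingEnd ℂ) (s k l) + 1)
              * riemannZeta (s j l + (starRingEnd ℂ) (s k l)))
          * c j * (starRingEnd ℂ) (c k) := by
  intro c
  have h := key_pos s hs hne Finset.univ c
  simpa only [Bfn, sub_sub] using h
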